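/- Define f : (0,1) → ℝ by f(r) = 4·(arctanh r)²·((1−r²)/r)². Then f is strictly decreasing on the interval (0,1). -/

import Mathlib

/-- Inverse hyperbolic tangent: `arctanh r = ½ · log((1+r)/(1−r))`. -/
noncomputable def arctanh (x : ℝ) : ℝ := (1 / 2) * Real.log ((1 + x) / (1 - x))

/-- `f r = 4 · (arctanh r)² · ((1 − r²)/r)²`. -/
noncomputable def f (r : ℝ) : ℝ := 4 * (arctanh r) ^ 2 * ((1 - r ^ 2) / r) ^ 2

noncomputable def g (r : ℝ) : ℝ := (Real.log (1 + r) - Real.log (1 - r)) * (1 / r - r)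

lemma log_ineq {r : ℝ} (hr : r ∈ Set.Ioo (0:ℝ) 1) :
    2 * r < Real.log (1 + r) - Real.log (1 - r) := by
  obtain ⟨h0, h1⟩ := hr
  have key : StrictMonoOn (fun x : ℝ => Real.log (1 + x) - Real.log (1 - x) - 2 * x)
      (Set.Ico (0:ℝ) 1) := by
    apply strictMonoOn_of_deriv_pos (convex_Ico 0 1)
    · apply ContinuousOn.sub
      · apply ContinuousOn.sub
        · exact (continuousOn_const.add continuousOn_id).log (fun x hx => by
            have := hx.1; show (1:ℝ) + x ≠ 0; intro h; linarith)
        · exact (continuousOn_const.sub continuousOn_id).log (fun x hx => by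
            have := hx.2; show (1:ℝ) - x ≠ 0; intro h; linarith)
      · exact continuousOn_const.mul continuousOn_id
    · intro x hx
      rw [interior_Ico] at hx
      obtain ⟨hx0, hx1⟩ := hx
      have hp : (0:ℝ) < 1 + x := by linarith
      have hm : (0:ℝ) < 1 - x := by linarith
      have hd : HasDerivAt (fun x : ℝ => Real.log (1 + x) - Real.log (1 - x) - 2 * x)
          (1/(1+x) + 1/(1-x) - 2) x := by
        have h1' : HasDerivAt (fun x : ℝ => Real.log (1 + x)) (1/(1+x)) x := by
          have h := ((hasDerivAt_id x).const_add 1).log hp.ne'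
          simpa using h
        have h2' : HasDerivAt (fun x : ℝ => Real.log (1 - x)) (-(1/(1-x))) x := by
          have h := ((hasDerivAt_id x).const_sub 1).log hm.ne'
          simpa [neg_div] using h
        have h3' : HasDerivAt (fun x : ℝ => 2 * x) 2 x := by
          simpa using (hasDerivAt_id x).const_mul 2
        have := (h1'.sub h2').sub h3'
        convert this using 1
        · rfl
        · rfl
        · rfl
        · ring
      rw [hd.deriv]
      have e : 1/(1+x) + 1/(1-x) - 2 = 2*x^2 / ((1+x)*(1-x)) := by
        field_simp; ring
      rw [e]
      positivity
  have h00 : (0:ℝ) ∈ Set.Ico (0:ℝ) 1 := ⟨le_rfl, one_pos⟩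
  have hr' : r ∈ Set.Ico (0:ℝ) 1 := ⟨h0.le, h1⟩
  have := key h00 hr' h0
  simp at this
  linarith

lemma g_anti : StrictAntiOn g (Set.Ioo (0:ℝ) 1) := by
  apply strictAntiOn_of_deriv_neg (convex_Ioo 0 1)
  · apply ContinuousOn.mul
    · apply ContinuousOn.sub
      · exact (continuousOn_const.add continuousOn_id).log (fun x hx => by
          have := hx.1; show (1:ℝ) + x ≠ 0; intro h; linarith)
      · exact (continuousOn_const.sub continuousOn_id).log (fun x hx => by
          have := hx.2; show (1:ℝ) - x ≠ 0; intro h; linarith)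
    · exact (continuousOn_const.div continuousOn_id (fun x hx => hx.1.ne')).sub continuousOn_id
  · intro x hx
    rw [interior_Ioo] at hx
    obtain ⟨hx0, hx1⟩ := hx
    have hp : (0:ℝ) < 1 + x := by linarith
    have hm : (0:ℝ) < 1 - x := by linarith
    set L := Real.log (1 + x) - Real.log (1 - x) with hL
    have hd : HasDerivAt g ((1/(1+x) + 1/(1-x)) * (1/x - x) + L * (-(1/x^2) - 1)) x := by
      have h1' : HasDerivAt (fun x : ℝ => Real.log (1 + x)) (1/(1+x)) x := by
        simpa using ((hasDerivAt_id x).const_add 1).log hp.ne'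
      have h2' : HasDerivAt (fun x : ℝ => Real.log (1 - x)) (-(1/(1-x))) x := by
        simpa [neg_div] using ((hasDerivAt_id x).const_sub 1).log hm.ne'
      have h3' : HasDerivAt (fun x : ℝ => 1/x - x) (-(1/x^2) - 1) x := by
        have hi : HasDerivAt (fun x : ℝ => x⁻¹) (-(x^2)⁻¹) x := hasDerivAt_inv hx0.ne'
        have := hi.sub (hasDerivAt_id x)
        simp only [one_div]; exact this
      have := ((h1'.sub h2').mul h3')
      convert this using 1
      · rfl
      · rfl
      · rfl
      · simp only [hL, Pi.sub_apply]; ring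
    rw [hd.deriv]
    have hLgt : 2 * x < L := log_ineq ⟨hx0, hx1⟩
    have e : (1/(1+x) + 1/(1-x)) * (1/x - x) + L * (-(1/x^2) - 1)
        = (2*x - L*(1+x^2)) / x^2 := by
      field_simp
      ring
    rw [e]
    apply div_neg_of_neg_of_pos
    · nlinarith
    · positivity

lemma g_pos {r : ℝ} (hr : r ∈ Set.Ioo (0:ℝ) 1) : 0 < g r := by
  obtain ⟨h0, h1⟩ := hr
  have hL : 0 < Real.log (1 + r) - Real.log (1 - r) := by
    have := log_ineq (⟨h0, h1⟩ : r ∈ Set.Ioo (0:ℝ) 1); linarith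
  have hX : 0 < 1 / r - r := by
    have : r < 1 / r := by
      rw [lt_div_iff₀ h0]; nlinarith
    linarith
  exact mul_pos hL hX

lemma f_eq {r : ℝ} (hr : r ∈ Set.Ioo (0:ℝ) 1) : f r = (g r) ^ 2 := by
  obtain ⟨h0, h1⟩ := hr
  have hp : (0:ℝ) < 1 + r := by linarith
  have hm : (0:ℝ) < 1 - r := by linarith
  have hlog : Real.log ((1 + r) / (1 - r)) = Real.log (1 + r) - Real.log (1 - r) :=
    Real.log_div hp.ne' hm.ne'
  have hX : (1 - r ^ 2) / r = 1 / r - r := by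
    field_simp
  rw [f, arctanh, g, hlog, hX]
  ring

/-- `f` is strictly decreasing on `(0,1)`. -/
theorem f_strictAntiOn : StrictAntiOn f (Set.Ioo 0 1) := by
  intro a ha b hb hab
  rw [f_eq ha, f_eq hb]
  have h := g_anti ha hb hab
  have hbpos := g_pos hb
  nlinarith [g_pos ha]
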